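/- arXiv:2509.09895 — 2 statements merged into one kernel-verified Lean document; each statement's English description precedes it below -/
import Mathlib

section
/- Let k ≥ 3, let G be 2-connected with no k-wheel minor, let C be a cycle or edge of G with vertices v_1, …, v_c where v_1 v_c ∈ E(C), let P′ be a v_1–v_c path internally disjoint from C with |V(P′)| ≥ 3 and V(C) ∪ V(P′) ≠ V(G), chosen to maximize the size of a largest component M of G − (V(C) ∪ V(P′)). Then there is no path Q in G − E(C) between two distinct vertices x, y of P′, internally disjoint from V(C) ∪ V(P′) ∪ V(M), such that some vertex of V(P′ − {v_1,v_c}) ∩ N_G(V(M)) is an internal vertex of the subpath of P′ between x and y. -/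
open SimpleGraph

/-- A tree-decomposition of the graph `G` over the tree `τ` with bags `X`. -/
structure IsTreeDecomp {V : Type} {T : Type} (G : SimpleGraph V) (τ : SimpleGraph T)
    (X : T → Set V) : Prop where
  isTree : τ.IsTree
  coverV : ∀ v : V, ∃ t, v ∈ X t
  coverE : ∀ ⦃u v : V⦄, G.Adj u v → ∃ t, u ∈ X t ∧ v ∈ X t
  subtreeConn : ∀ v : V, (τ.induce {t | v ∈ X t}).Connected

/-- The graph `G` has tree-width at most `w`. -/
def TreewidthAtMost {V : Type} (G : SimpleGraph V) (w : ℤ) : Prop :=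
  ∃ (T : Type) (τ : SimpleGraph T) (X : T → Set V),
    IsTreeDecomp G τ X ∧ ∀ t, ((X t).ncard : ℤ) ≤ w + 1

/-- `H` is a minor of `G`: there is a family of nonempty, pairwise disjoint, connected
branch sets in `G`, one for each vertex of `H`, with edges of `H` realized by edges of `G`. -/
def IsMinorOf {W V : Type} (H : SimpleGraph W) (G : SimpleGraph V) : Prop :=
  ∃ f : W → Set V, (∀ w, (f w).Nonempty) ∧ (∀ w, (G.induce (f w)).Connected) ∧
    (Pairwise fun w₁ w₂ => Disjoint (f w₁) (f w₂)) ∧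
    ∀ ⦃w₁ w₂⦄, H.Adj w₁ w₂ → ∃ u ∈ f w₁, ∃ x ∈ f w₂, G.Adj u x

/-- `F⁺`: the graph obtained from `F` by adding a new apex vertex adjacent to all of `F`. -/
def addApex {α : Type} (F : SimpleGraph α) : SimpleGraph (Option α) :=
  SimpleGraph.fromRel (fun a b => (a = none ∧ b ≠ none) ∨
    ∃ x y, a = some x ∧ b = some y ∧ F.Adj x y)

/-- The neighbourhood `N_G(X)` of a vertex set `X`. -/
def nbhd {V : Type} (G : SimpleGraph V) (X : Set V) : Set V :=
  {v | v ∉ X ∧ ∃ u ∈ X, G.Adj u v}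

section Helpers
open SimpleGraph Walk List
private lemma mem_take_idxOf' {α : Type*} [DecidableEq α] {L : List α} {u : α} {n : ℕ}
    (h : u ∈ L.take n) : L.idxOf u < n := by
  have h1 : L.idxOf u = (L.take n).idxOf u := by
    conv_lhs => rw [← List.take_append_drop n L]
    rw [List.idxOf_append_of_mem h]
  have h2 : (L.take n).idxOf u < (L.take n).length := List.idxOf_lt_length_iff.2 h
  rw [List.length_take] at h2
  omega

private lemma idxOf_mem_take' {α : Type*} [DecidableEq α] {L : List α} {u : α} {n : ℕ}
    (hu : u ∈ L) (h : L.idxOf u < n) : u ∈ L.take n := by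
  have hlt : L.idxOf u < L.length := List.idxOf_lt_length_iff.2 hu
  have hlen : L.idxOf u < (L.take n).length := by rw [List.length_take]; omega
  have : (L.take n)[L.idxOf u]'hlen = u := by
    rw [List.getElem_take]
    exact List.getElem_idxOf hlt
  exact this ▸ List.getElem_mem hlen

private lemma nodup_mem_drop' {α : Type*} [DecidableEq α] {L : List α} (hL : L.Nodup) {u : α}
    {n : ℕ} (h : u ∈ L.drop n) : n ≤ L.idxOf u := by
  by_contra hc
  push_neg at hc
  have hu : u ∈ L := List.mem_of_mem_drop h
  have h1 : u ∈ L.take n := idxOf_mem_take' hu hc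
  rw [← List.take_append_drop n L, List.nodup_append] at hL
  exact hL.2.2 u h1 u h rfl

private lemma support_take_drop {V : Type} [DecidableEq V] {G : SimpleGraph V} {v w u : V}
    (p : G.Walk v w) (hp : p.IsPath) (h : u ∈ p.support) :
    (p.takeUntil u h).support = p.support.take (p.support.idxOf u + 1) ∧
    (p.dropUntil u h).support = u :: p.support.drop (p.support.idxOf u + 1) := by
  set T := (p.takeUntil u h).support with hT
  set D := (p.dropUntil u h).support with hDdef
  have hsplit : p.support = T ++ D.tail := by
    conv_lhs => rw [← take_spec p h]
    rw [support_append]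
  have hDcons : D = u :: D.tail := (p.dropUntil u h).support_eq_cons
  have hTne : T ≠ [] := support_ne_nil _
  have hTlast : T.getLast hTne = u := getLast_support _
  have hnd : (T ++ D.tail).Nodup := hsplit ▸ hp.support_nodup
  have huT : u ∈ T := end_mem_support _
  have hTnd : T.Nodup := (List.nodup_append.mp hnd).1
  have h2 : T.dropLast ++ [u] = T := by rw [← hTlast]; exact List.dropLast_append_getLast hTne
  have hu_not : u ∉ T.dropLast := by
    intro hmem
    rw [← h2, List.nodup_append] at hTnd
    exact hTnd.2.2 u hmem u (List.mem_singleton_self u) rfl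
  have hidxT : T.idxOf u = T.dropLast.length := by
    conv_lhs => rw [← h2]
    rw [List.idxOf_append_of_notMem hu_not]
    simp
  have hTlen : T.length = T.dropLast.length + 1 := by
    conv_lhs => rw [← h2]
    simp
  have hlen : p.support.idxOf u + 1 = T.length := by
    rw [hsplit, List.idxOf_append_of_mem huT, hidxT, hTlen]
  constructor
  · rw [hsplit, List.idxOf_append_of_mem huT, hidxT, ← hTlen, List.take_left]
  · rw [hsplit, List.idxOf_append_of_mem huT, hidxT, ← hTlen, List.drop_left, ← hDcons]

private lemma reach_of_walk_subset {V : Type} {G : SimpleGraph V} {S T : Set V}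
    {u v : {x // x ∈ S}} (W : (G.induce S).Walk u v)
    (hsub : ∀ w ∈ W.support, (w : V) ∈ T) :
    (G.induce T).Reachable ⟨u, hsub u W.start_mem_support⟩ ⟨v, hsub v W.end_mem_support⟩ := by
  induction W with
  | nil => rfl
  | @cons a b c hadj p ih =>
    have h1 : (G.induce T).Adj ⟨a.1, hsub a (start_mem_support _)⟩ ⟨b.1, hsub b (by simp)⟩ :=
      hadj
    exact Reachable.trans h1.reachable (ih (fun w hw => hsub w (by simp [hw])))

private lemma edges_of_length_one {V : Type} {G : SimpleGraph V} {x y : V} {Q : G.Walk x y}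
    (h : Q.length = 1) : s(x, y) ∈ Q.edges := by
  cases Q with
  | nil => simp at h
  | cons hadj q =>
    have h0 : q.length = 0 := by simp only [Walk.length_cons] at h; omega
    have := Walk.eq_of_length_eq_zero h0
    subst this
    simp

private lemma key_stmt17 {V : Type} [Fintype V] [DecidableEq V] (G : SimpleGraph V)
    (VC : Set V) (EC : Set (Sym2 V))
    (v1 vc : V) (hedge : s(v1, vc) ∈ EC)
    (P' : G.Walk v1 vc) (hP'path : P'.IsPath)
    (hP'int : ∀ y ∈ P'.support, y ≠ v1 → y ≠ vc → y ∉ VC)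
    (M : (G.induce (VC ∪ {y | y ∈ P'.support})ᶜ).ConnectedComponent)
    (hmax : ∀ (v1' vc' : V), s(v1', vc') ∈ EC → ∀ P'' : G.Walk v1' vc',
      P''.IsPath → 3 ≤ P''.support.length →
      (∀ y ∈ P''.support, y ≠ v1' → y ≠ vc' → y ∉ VC) →
      VC ∪ {y | y ∈ P''.support} ≠ Set.univ →
      ∀ M'' : (G.induce (VC ∪ {y | y ∈ P''.support})ᶜ).ConnectedComponent,
        (Subtype.val '' M''.supp).ncard ≤ (Subtype.val '' M.supp).ncard)
    (VM : Set V) (hVM : VM = Subtype.val '' M.supp)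
    (x y : V) (Q : G.Walk x y) (hxy : x ≠ y) (hx : x ∈ P'.support) (hy : y ∈ P'.support)
    (hQp : Q.IsPath) (hQE : ∀ e ∈ Q.edges, e ∉ EC)
    (hQint : ∀ w ∈ Q.support, w ≠ x → w ≠ y → w ∉ VC ∪ {y' | y' ∈ P'.support} ∪ VM)
    (a : V) (haP : a ∈ P'.support) (hav1 : a ≠ v1) (havc : a ≠ vc)
    (hanb : a ∈ nbhd G VM)
    (hxa : P'.support.idxOf x < P'.support.idxOf a)
    (hay : P'.support.idxOf a < P'.support.idxOf y) : False := by
  classical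
  obtain ⟨hTx, -⟩ := support_take_drop P' hP'path hx
  obtain ⟨-, hDy⟩ := support_take_drop P' hP'path hy
  have hnd : P'.support.Nodup := hP'path.support_nodup
  set P'' := (P'.takeUntil x hx).append (Q.append (P'.dropUntil y hy)) with hP''
  have hQcons : Q.support = x :: Q.support.tail := Q.support_eq_cons
  have hsupp : P''.support = P'.support.take (P'.support.idxOf x + 1) ++
      (Q.support.tail ++ P'.support.drop (P'.support.idxOf y + 1)) := by
    rw [hP'', support_append, support_append, hTx, hDy]
    conv_lhs => rw [hQcons]
    simp
  have hmem : ∀ u, u ∈ P''.support → u ∈ P'.support.take (P'.support.idxOf x + 1) ∨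
      u ∈ Q.support.tail ∨ u ∈ P'.support.drop (P'.support.idxOf y + 1) := by
    intro u hu
    rw [hsupp] at hu
    simpa using hu
  have hixlt : P'.support.idxOf x < P'.support.length := List.idxOf_lt_length_iff.2 hx
  have hiylt : P'.support.idxOf y < P'.support.length := List.idxOf_lt_length_iff.2 hy
  have hQt : ∀ u ∈ Q.support.tail, u ∈ Q.support ∧ u ≠ x := by
    intro u hu
    refine ⟨List.mem_of_mem_tail hu, ?_⟩
    rintro rfl
    exact (List.nodup_cons.mp (hQcons ▸ hQp.support_nodup)).1 hu
  have hax : a ≠ x := by rintro rfl; exact lt_irrefl _ hxa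
  have hay' : a ≠ y := by rintro rfl; exact lt_irrefl _ hay
  -- a is not on the new path
  have haP'' : a ∉ P''.support := by
    intro hu
    rcases hmem a hu with h | h | h
    · have := mem_take_idxOf' h; omega
    · obtain ⟨hq, hnx⟩ := hQt a h
      exact (hQint a hq hnx hay') (Or.inl (Or.inr haP))
    · have := nodup_mem_drop' hnd h; omega
  have hVM_L : ∀ v ∈ VM, v ∉ VC ∧ v ∉ P'.support := by
    intro v hv
    rw [hVM] at hv
    obtain ⟨⟨v', hv'⟩, -, rfl⟩ := hv
    exact ⟨fun h => hv' (Or.inl h), fun h => hv' (Or.inr h)⟩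
  have hVMP'' : ∀ v ∈ VM, v ∉ P''.support := by
    intro v hv hc
    obtain ⟨hvVC, hvL⟩ := hVM_L v hv
    rcases hmem v hc with h | h | h
    · exact hvL (List.mem_of_mem_take h)
    · obtain ⟨hq, hnx⟩ := hQt v h
      have hny : v ≠ y := fun h' => hvL (h' ▸ hy)
      exact hQint v hq hnx hny (Or.inr hv)
    · exact hvL (List.mem_of_mem_drop h)
  -- the new walk is a path
  have hP''path : P''.IsPath := by
    rw [Walk.isPath_def, hsupp, List.nodup_append]
    refine ⟨hnd.sublist (List.take_sublist _ _), ?_, ?_⟩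
    · rw [List.nodup_append]
      refine ⟨(List.nodup_cons.mp (hQcons ▸ hQp.support_nodup)).2,
        hnd.sublist (List.drop_sublist _ _), ?_⟩
      rintro u huQ _ huD rfl
      obtain ⟨hq, hnx⟩ := hQt u huQ
      have hiu := nodup_mem_drop' hnd huD
      have hny : u ≠ y := by rintro rfl; omega
      exact hQint u hq hnx hny (Or.inl (Or.inr (List.mem_of_mem_drop huD)))
    · rintro u huT _ hu2 rfl
      have hiu := mem_take_idxOf' huT
      have huL : u ∈ P'.support := List.mem_of_mem_take huT
      rcases List.mem_append.mp hu2 with h | h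
      · obtain ⟨hq, hnx⟩ := hQt u h
        have hny : u ≠ y := by
          rintro rfl
          omega
        exact hQint u hq hnx hny (Or.inl (Or.inr huL))
      · have := nodup_mem_drop' hnd h
        omega
  -- length at least 3
  have hyQt : y ∈ Q.support.tail := by
    have := Q.end_mem_support
    rw [hQcons] at this
    rcases List.mem_cons.mp this with h | h
    · exact (hxy h.symm).elim
    · exact h
  have hlen3 : 3 ≤ P''.support.length := by
    rw [hsupp, List.length_append, List.length_append, List.length_take, List.length_drop]
    have h1 : 1 ≤ Q.support.tail.length := List.length_pos_iff.2 (List.ne_nil_of_mem hyQt)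
    by_contra hcon
    push_neg at hcon
    have hix0 : P'.support.idxOf x = 0 := by omega
    have hQt1 : Q.support.tail.length = 1 := by omega
    have hiy1 : P'.support.idxOf y = P'.support.length - 1 := by omega
    have hxv1 : x = v1 := by
      have h0 : P'.support[P'.support.idxOf x]? = some x := by
        rw [List.getElem?_eq_getElem hixlt, List.getElem_idxOf hixlt]
      rw [hix0] at h0
      have h2 : P'.support[0]? = some v1 := by
        conv_lhs => rw [P'.support_eq_cons]
        simp
      rw [h2] at h0
      exact (Option.some.inj h0).symm
    have hyvc : y = vc := by
      have h0 : P'.support[P'.support.idxOf y]? = some y := by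
        rw [List.getElem?_eq_getElem hiylt, List.getElem_idxOf hiylt]
      rw [hiy1] at h0
      have hlenpos : P'.support ≠ [] := Walk.support_ne_nil _
      have h2 : P'.support[P'.support.length - 1]? = some vc := by
        have h3 : P'.support.getLast hlenpos = vc := Walk.getLast_support _
        rw [List.getLast_eq_getElem] at h3
        rw [List.getElem?_eq_getElem (by
          have := List.length_pos_iff.2 hlenpos
          omega), h3]
      rw [h2] at h0
      exact (Option.some.inj h0).symm
    have hQlen1 : Q.length = 1 := by
      have hs := Q.length_support
      have : Q.support.length = 2 := by rw [hQcons]; simp only [List.length_cons, hQt1]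
      omega
    exact hQE _ (edges_of_length_one hQlen1) (by rw [hxv1, hyvc]; exact hedge)
  -- internal vertices of the new path avoid VC
  have hP''int : ∀ u ∈ P''.support, u ≠ v1 → u ≠ vc → u ∉ VC := by
    intro u hu h1 h2
    rcases hmem u hu with h | h | h
    · exact hP'int u (List.mem_of_mem_take h) h1 h2
    · obtain ⟨hq, hnx⟩ := hQt u h
      rcases eq_or_ne u y with rfl | hny
      · exact hP'int u hy h1 h2
      · exact fun hc => hQint u hq hnx hny (Or.inl (Or.inl hc))
    · exact hP'int u (List.mem_of_mem_drop h) h1 h2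
  have haVC : a ∉ VC := hP'int a haP hav1 havc
  have hane : VC ∪ {y | y ∈ P''.support} ≠ Set.univ := by
    intro hc
    have : a ∈ VC ∪ {y | y ∈ P''.support} := hc ▸ Set.mem_univ a
    rcases this with h | h
    · exact haVC h
    · exact haP'' h
  have haS : a ∈ (VC ∪ {y | y ∈ P''.support})ᶜ := fun hc => hc.elim haVC (fun h => haP'' h)
  have hVMsub : VM ⊆ (VC ∪ {y | y ∈ P''.support})ᶜ := fun v hv hc =>
    hc.elim (fun h => (hVM_L v hv).1 h) (fun h => hVMP'' v hv h)
  set M'' := (G.induce (VC ∪ {y | y ∈ P''.support})ᶜ).connectedComponentMk ⟨a, haS⟩ with hM''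
  obtain ⟨haVM, u0, hu0, hadj⟩ := hanb
  have hreach : ∀ v (hv : v ∈ VM),
      (G.induce (VC ∪ {y | y ∈ P''.support})ᶜ).Reachable ⟨v, hVMsub hv⟩ ⟨a, haS⟩ := by
    intro v hv
    obtain ⟨v', hv'M, hv'eq⟩ := (show v ∈ Subtype.val '' M.supp from hVM ▸ hv)
    obtain ⟨u', hu'M, hu'eq⟩ := (show u0 ∈ Subtype.val '' M.supp from hVM ▸ hu0)
    rw [ConnectedComponent.mem_supp_iff] at hv'M hu'M
    have hr : (G.induce (VC ∪ {y | y ∈ P'.support})ᶜ).Reachable v' u' :=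
      ConnectedComponent.exact (hv'M.trans hu'M.symm)
    obtain ⟨W⟩ := hr
    have hWsup : ∀ w ∈ W.support, (w : V) ∈ (VC ∪ {y | y ∈ P''.support})ᶜ := by
      intro w hw
      have hwM : w ∈ M.supp := by
        rw [ConnectedComponent.mem_supp_iff, ← hv'M]
        exact (ConnectedComponent.sound ((W.takeUntil w hw).reachable)).symm
      exact hVMsub (hVM ▸ (Set.mem_image_of_mem _ hwM))
    have hvu := reach_of_walk_subset W hWsup
    have hadj' : (G.induce (VC ∪ {y | y ∈ P''.support})ᶜ).Adj ⟨u0, hVMsub hu0⟩ ⟨a, haS⟩ := hadj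
    have e1 : (⟨(v' : V), hWsup v' W.start_mem_support⟩ :
        ↥(VC ∪ {y | y ∈ P''.support})ᶜ) = ⟨v, hVMsub hv⟩ := Subtype.ext hv'eq
    have e2 : (⟨(u' : V), hWsup u' W.end_mem_support⟩ :
        ↥(VC ∪ {y | y ∈ P''.support})ᶜ) = ⟨u0, hVMsub hu0⟩ := Subtype.ext hu'eq
    rw [e1, e2] at hvu
    exact hvu.trans hadj'.reachable
  have hsub2 : insert a VM ⊆ Subtype.val '' M''.supp := by
    intro t ht
    rcases Set.mem_insert_iff.mp ht with rfl | htVM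
    · exact ⟨⟨t, haS⟩, by rw [ConnectedComponent.mem_supp_iff], rfl⟩
    · refine ⟨⟨t, hVMsub htVM⟩, ?_, rfl⟩
      rw [ConnectedComponent.mem_supp_iff, hM'']
      exact ConnectedComponent.sound (hreach t htVM)
  have hle := hmax v1 vc hedge P'' hP''path hlen3 hP''int hane M''
  have h1 : (insert a VM).ncard ≤ (Subtype.val '' M''.supp).ncard :=
    Set.ncard_le_ncard hsub2 (Set.toFinite _)
  rw [Set.ncard_insert_of_notMem haVM (Set.toFinite _)] at h1
  rw [← hVM] at hle
  omega

end Helpers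

/-- in the wheel setup (G 2-connected with no k-wheel minor, C a cycle or
edge with at most k−1 vertices, P′ a v₁–v_c path internally disjoint from C with at least
3 vertices not covering G, chosen to maximize the largest component M of
G − (V(C) ∪ V(P′))), there is no path Q in G − E(C) between two distinct vertices x, y of
P′, internally disjoint from V(C) ∪ V(P′) ∪ V(M), such that some vertex of
A = V(P′ − {v₁,v_c}) ∩ N_G(V(M)) lies strictly between x and y on P′. -/
theorem stmt17 (k : ℕ) (hk : 3 ≤ k) {V : Type} [Fintype V] [DecidableEq V]
    (G : SimpleGraph V)
    (h2conn : G.Connected ∧ ∀ x : V, (G.induce {u | u ≠ x}).Connected)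
    (hG : ¬ IsMinorOf (addApex (cycleGraph k)) G)
    (VC : Set V) (EC : Set (Sym2 V))
    (hC : (∃ u w, G.Adj u w ∧ VC = {u, w} ∧ EC = {s(u, w)}) ∨
      ∃ (x : V) (wlk : G.Walk x x), wlk.IsCycle ∧ wlk.length ≤ k - 1 ∧
        VC = {y | y ∈ wlk.support} ∧ EC = {e | e ∈ wlk.edges})
    (v1 vc : V) (hedge : s(v1, vc) ∈ EC)
    (P' : G.Walk v1 vc) (hP'path : P'.IsPath) (hP'len : 3 ≤ P'.support.length)
    (hP'int : ∀ y ∈ P'.support, y ≠ v1 → y ≠ vc → y ∉ VC)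
    (hP'ne : VC ∪ {y | y ∈ P'.support} ≠ Set.univ)
    (M : (G.induce (VC ∪ {y | y ∈ P'.support})ᶜ).ConnectedComponent)
    (hmax : ∀ (v1' vc' : V), s(v1', vc') ∈ EC → ∀ P'' : G.Walk v1' vc',
      P''.IsPath → 3 ≤ P''.support.length →
      (∀ y ∈ P''.support, y ≠ v1' → y ≠ vc' → y ∉ VC) →
      VC ∪ {y | y ∈ P''.support} ≠ Set.univ →
      ∀ M'' : (G.induce (VC ∪ {y | y ∈ P''.support})ᶜ).ConnectedComponent,
        (Subtype.val '' M''.supp).ncard ≤ (Subtype.val '' M.supp).ncard)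
    (VM : Set V) (hVM : VM = Subtype.val '' M.supp)
    (A : Set V) (hA : A = ({y | y ∈ P'.support} \ {v1, vc}) ∩ nbhd G VM) :
    ¬ ∃ (x y : V) (Q : G.Walk x y), x ≠ y ∧ x ∈ P'.support ∧ y ∈ P'.support ∧
      Q.IsPath ∧ (∀ e ∈ Q.edges, e ∉ EC) ∧
      (∀ w ∈ Q.support, w ≠ x → w ≠ y → w ∉ VC ∪ {y' | y' ∈ P'.support} ∪ VM) ∧
      ∃ a ∈ A,
        (P'.support.idxOf x < P'.support.idxOf a ∧
          P'.support.idxOf a < P'.support.idxOf y) ∨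
        (P'.support.idxOf y < P'.support.idxOf a ∧
          P'.support.idxOf a < P'.support.idxOf x) := by
  rintro ⟨x, y, Q, hxy, hx, hy, hQp, hQE, hQint, a, haA, hord⟩
  rw [hA] at haA
  obtain ⟨⟨haP, hane⟩, hanb⟩ := haA
  have hav1 : a ≠ v1 := fun h => hane (by simp [h])
  have havc : a ≠ vc := fun h => hane (by simp [h])
  rcases hord with ⟨h1, h2⟩ | ⟨h1, h2⟩
  · exact key_stmt17 G VC EC v1 vc hedge P' hP'path hP'int M hmax VM hVM x y Q hxy hx hy
      hQp hQE hQint a haP hav1 havc hanb h1 h2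
  · refine key_stmt17 G VC EC v1 vc hedge P' hP'path hP'int M hmax VM hVM y x Q.reverse
      hxy.symm hy hx hQp.reverse ?_ ?_ a haP hav1 havc hanb h1 h2
    · intro e he
      exact hQE e (by simpa using he)
    · intro w hw hny hnx
      exact hQint w (by simpa using hw) hnx hny
end

section
/- In the setup of the wheel proof (G 2-connected without k-wheel minor; C a cycle or edge with at most k−1 vertices; P′ a v_1–v_c path internally disjoint from C maximizing the largest component M of G − (V(C) ∪ V(P′)); A = V(P′ − {v_1,v_c}) ∩ N_G(V(M)); bad vertices are r ∈ V(C) for which there is a jump from r, avoiding M, to a vertex of A other than the two extreme vertices a, a′ of A): if r ∈ V(C) is bad and r′ is a neighbor of r on C, then no jump avoiding M starts at r′; in particular no two bad vertices are adjacent on C. -/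
open SimpleGraph

namespace Stmt18Aux

variable {V : Type} [DecidableEq V] {G : SimpleGraph V}

lemma take_drop_disj {u v y : V} {p : G.Walk u v} (hp : p.IsPath) (hy : y ∈ p.support)
    {w : V} (h1 : w ∈ (p.takeUntil y hy).support) (h2 : w ∈ (p.dropUntil y hy).support) :
    w = y := by
  have hnd : p.support.Nodup := hp.support_nodup
  have hsplit : ((p.takeUntil y hy).append (p.dropUntil y hy)).support = p.support := by
    rw [SimpleGraph.Walk.take_spec]
  rw [SimpleGraph.Walk.support_append] at hsplit
  rw [← hsplit] at hnd
  have hdisj := List.disjoint_of_nodup_append hnd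
  by_contra hne
  have : w ∈ (p.dropUntil y hy).support.tail := by
    have := (p.dropUntil y hy).support_eq_cons
    rw [this] at h2
    rcases List.mem_cons.1 h2 with h2 | h2
    · exact absurd h2 hne
    · exact h2
  exact hdisj h1 this

lemma mem_takeUntil_of_idx_lt {u v y z : V} {p : G.Walk u v} (hy : y ∈ p.support)
    (hz : z ∈ p.support) (hlt : p.support.idxOf z < p.support.idxOf y) :
    z ∈ (p.takeUntil y hy).support := by
  clear hz
  by_contra hzn
  have hsplit : p.support =
      (p.takeUntil y hy).support ++ (p.dropUntil y hy).support.tail := by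
    conv_lhs => rw [← SimpleGraph.Walk.take_spec p hy]
    rw [SimpleGraph.Walk.support_append]
  have hyin : y ∈ (p.takeUntil y hy).support := SimpleGraph.Walk.end_mem_support _
  have hylt : p.support.idxOf y < (p.takeUntil y hy).support.length := by
    rw [hsplit, List.idxOf_append_of_mem hyin]
    exact List.idxOf_lt_length_iff.2 hyin
  have hzge : (p.takeUntil y hy).support.length ≤ p.support.idxOf z := by
    rw [hsplit, List.idxOf_append_of_notMem hzn]
    exact Nat.le_add_right _ _
  omega

lemma idx_end_eq {u v : V} {p : G.Walk u v} (hp : p.IsPath) :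
    p.support.idxOf v = p.support.length - 1 := by
  have hnd : p.support.Nodup := hp.support_nodup
  have hne : p.support ≠ [] := SimpleGraph.Walk.support_ne_nil _
  have hlast : p.support.getLast hne = v := SimpleGraph.Walk.getLast_support _
  have hsplit : p.support = p.support.dropLast ++ [p.support.getLast hne] :=
    (List.dropLast_append_getLast hne).symm
  have hvnot : v ∉ p.support.dropLast := by
    intro hmem
    have hnd' : (p.support.dropLast ++ [p.support.getLast hne]).Nodup := by rw [← hsplit]; exact hnd
    exact (List.disjoint_of_nodup_append hnd') hmem (by simp [hlast])
  conv_lhs => rw [hsplit]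
  rw [List.idxOf_append_of_notMem hvnot, hlast]
  have hl : p.support.length = p.support.dropLast.length + 1 := by
    conv_lhs => rw [hsplit]
    simp
  have h0 : List.idxOf v [v] = 0 := by simp
  rw [h0]
  omega

lemma not_mem_takeUntil_of_idx_lt {u v y z : V} {p : G.Walk u v} (hp : p.IsPath)
    (hy : y ∈ p.support) (hlt : p.support.idxOf y < p.support.idxOf z) :
    z ∉ (p.takeUntil y hy).support := by
  intro hzin
  have hsplit : p.support =
      (p.takeUntil y hy).support ++ (p.dropUntil y hy).support.tail := by
    conv_lhs => rw [← SimpleGraph.Walk.take_spec p hy]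
    rw [SimpleGraph.Walk.support_append]
  have hyin : y ∈ (p.takeUntil y hy).support := SimpleGraph.Walk.end_mem_support _
  have htp : (p.takeUntil y hy).IsPath := hp.takeUntil hy
  have hidxy : (p.takeUntil y hy).support.idxOf y =
      (p.takeUntil y hy).support.length - 1 := idx_end_eq htp
  have h1 : p.support.idxOf y = (p.takeUntil y hy).support.idxOf y := by
    rw [hsplit, List.idxOf_append_of_mem hyin]
  have h2 : p.support.idxOf z = (p.takeUntil y hy).support.idxOf z := by
    rw [hsplit, List.idxOf_append_of_mem hzin]
  have h3 : (p.takeUntil y hy).support.idxOf z < (p.takeUntil y hy).support.length :=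
    List.idxOf_lt_length_iff.2 hzin
  have h4 : 0 < (p.takeUntil y hy).support.length :=
    List.length_pos_iff.2 (SimpleGraph.Walk.support_ne_nil _)
  omega

lemma two_le_length {r r' : V} (w : G.Walk r r') (hne : r ≠ r')
    (he : s(r, r') ∉ w.edges) : 2 ≤ w.length := by
  cases w with
  | nil => exact absurd rfl hne
  | cons h q =>
    cases q with
    | nil => exact absurd (by simp) he
    | cons h' q' => simp [SimpleGraph.Walk.length_cons]

lemma reach_transfer {T S : Set V} :
    ∀ {p q : {x // x ∈ T}} (w : (G.induce T).Walk p q)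
      (hws : ∀ z ∈ w.support, (z : V) ∈ S) (hp : (p : V) ∈ S) (hq : (q : V) ∈ S),
      (G.induce S).Reachable ⟨p, hp⟩ ⟨q, hq⟩ := by
  intro p q w
  induction w with
  | nil => intro _ hp hq; exact SimpleGraph.Reachable.refl _
  | @cons a b c h w ih =>
    intro hws hp hq
    have hb : (b : V) ∈ S := hws b (by simp [SimpleGraph.Walk.support_cons])
    have hadj : G.Adj (a : V) (b : V) := h
    have hadj' : (G.induce S).Adj ⟨a, hp⟩ ⟨b, hb⟩ := hadj
    exact hadj'.reachable.trans
      (ih (fun z hz => hws z (by simp [SimpleGraph.Walk.support_cons, hz])) hb hq)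

end Stmt18Aux


open Stmt18Aux

/-- in the wheel setup, with `A = V(P′ − {v₁,v_c}) ∩ N_G(V(M))`, `a` and `a′`
the vertices of `A` closest along `P′` to `v₁` and `v_c`, jumps being paths from `V(C)` to
`A` internally disjoint from `V(C) ∪ A`, and a vertex `r ∈ V(C)` bad when some jump from
`r` avoiding `M` ends in `A − {a, a′}`: if `r` is bad and `r′` is a neighbour of `r` on
`C`, then no jump avoiding `M` starts at `r′`; in particular no two bad vertices are
adjacent on `C`. -/
theorem stmt18 (k : ℕ) (hk : 3 ≤ k) {V : Type} [Fintype V] [DecidableEq V]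
    (G : SimpleGraph V)
    (h2conn : G.Connected ∧ ∀ x : V, (G.induce {u | u ≠ x}).Connected)
    (hG : ¬ IsMinorOf (addApex (cycleGraph k)) G)
    (VC : Set V) (EC : Set (Sym2 V))
    (hC : (∃ u w, G.Adj u w ∧ VC = {u, w} ∧ EC = {s(u, w)}) ∨
      ∃ (x : V) (wlk : G.Walk x x), wlk.IsCycle ∧ wlk.length ≤ k - 1 ∧
        VC = {y | y ∈ wlk.support} ∧ EC = {e | e ∈ wlk.edges})
    (v1 vc : V) (hedge : s(v1, vc) ∈ EC)
    (P' : G.Walk v1 vc) (hP'path : P'.IsPath) (hP'len : 3 ≤ P'.support.length)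
    (hP'int : ∀ y ∈ P'.support, y ≠ v1 → y ≠ vc → y ∉ VC)
    (hP'ne : VC ∪ {y | y ∈ P'.support} ≠ Set.univ)
    (M : (G.induce (VC ∪ {y | y ∈ P'.support})ᶜ).ConnectedComponent)
    (hmax : ∀ (v1' vc' : V), s(v1', vc') ∈ EC → ∀ P'' : G.Walk v1' vc',
      P''.IsPath → 3 ≤ P''.support.length →
      (∀ y ∈ P''.support, y ≠ v1' → y ≠ vc' → y ∉ VC) →
      VC ∪ {y | y ∈ P''.support} ≠ Set.univ →
      ∀ M'' : (G.induce (VC ∪ {y | y ∈ P''.support})ᶜ).ConnectedComponent,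
        (Subtype.val '' M''.supp).ncard ≤ (Subtype.val '' M.supp).ncard)
    (VM : Set V) (hVM : VM = Subtype.val '' M.supp)
    (A : Set V) (hA : A = ({y | y ∈ P'.support} \ {v1, vc}) ∩ nbhd G VM)
    (a a' : V) (haA : a ∈ A) (ha'A : a' ∈ A)
    (hafirst : ∀ b ∈ A, P'.support.idxOf a ≤ P'.support.idxOf b)
    (ha'last : ∀ b ∈ A, P'.support.idxOf b ≤ P'.support.idxOf a')
    (Jump : V → V → Prop)
    (hJump : ∀ r x, Jump r x ↔ x ∈ A ∧ ∃ Q : G.Walk r x, Q.IsPath ∧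
      (∀ w ∈ Q.support, w ≠ r → w ≠ x → w ∉ VC ∪ A) ∧
      (∀ w ∈ Q.support, w ∉ VM))
    (bad : V → Prop)
    (hbad : ∀ r, bad r ↔ r ∈ VC ∧ ¬ {x | Jump r x} ⊆ {a, a'}) :
    (∀ r r' : V, bad r → s(r, r') ∈ EC → ∀ x, ¬ Jump r' x) ∧
    (∀ r r' : V, bad r → bad r' → s(r, r') ∉ EC) := by
  clear hk hG h2conn hP'len
  -- facts about edges of C
  have hECfact : ∀ {p q : V}, s(p, q) ∈ EC → G.Adj p q ∧ p ∈ VC ∧ q ∈ VC := by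
    intro p q hpq
    rcases hC with ⟨u, w, huw, hVCe, hECe⟩ | ⟨x0, wlk, hcyc, _, hVCe, hECe⟩
    · rw [hECe] at hpq
      simp only [Set.mem_singleton_iff, Sym2.eq, Sym2.rel_iff', Prod.mk.injEq,
        Prod.swap_prod_mk] at hpq
      rcases hpq with ⟨rfl, rfl⟩ | ⟨rfl, rfl⟩
      · exact ⟨huw, by simp [hVCe], by simp [hVCe]⟩
      · exact ⟨huw.symm, by simp [hVCe], by simp [hVCe]⟩
    · rw [hECe] at hpq
      have hmemE : s(p, q) ∈ wlk.edges := hpq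
      refine ⟨wlk.adj_of_mem_edges hmemE, ?_, ?_⟩
      · rw [hVCe]; exact wlk.fst_mem_support_of_mem_edges hmemE
      · rw [hVCe]; exact wlk.snd_mem_support_of_mem_edges hmemE
  -- facts about VM
  have hVMfact : ∀ m ∈ VM, m ∉ VC ∧ m ∉ P'.support := by
    intro m hm
    rw [hVM] at hm
    obtain ⟨z, hz, rfl⟩ := hm
    have := z.2
    simp only [Set.mem_compl_iff, Set.mem_union, Set.mem_setOf_eq, not_or] at this
    exact this
  -- facts about A
  have hAfact : ∀ b ∈ A, b ∈ P'.support ∧ b ≠ v1 ∧ b ≠ vc ∧ b ∉ VC ∧ b ∉ VM ∧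
      ∃ m ∈ VM, G.Adj m b := by
    intro b hb
    rw [hA] at hb
    obtain ⟨⟨hb1, hb2⟩, hb3⟩ := hb
    simp only [Set.mem_setOf_eq] at hb1
    simp only [Set.mem_insert_iff, Set.mem_singleton_iff, not_or] at hb2
    obtain ⟨hbv1, hbvc⟩ := hb2
    obtain ⟨hbnVM, m, hmVM, hmb⟩ := hb3
    exact ⟨hb1, hbv1, hbvc, hP'int b hb1 hbv1 hbvc, hbnVM, m, hmVM, hmb⟩
  have part1 : ∀ r r' : V, bad r → s(r, r') ∈ EC → ∀ x, ¬ Jump r' x := by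
    intro r r' hbadr hrr' y hJ'
    obtain ⟨hrVC, hnsub⟩ := (hbad r).1 hbadr
    obtain ⟨x, hJx, hxnot⟩ := Set.not_subset.1 hnsub
    simp only [Set.mem_setOf_eq] at hJx
    simp only [Set.mem_insert_iff, Set.mem_singleton_iff, not_or] at hxnot
    obtain ⟨hxa, hxa'⟩ := hxnot
    rw [hJump] at hJx hJ'
    obtain ⟨hxA, J, hJpath, hJint, hJM⟩ := hJx
    obtain ⟨hyA, J', hJ'path, hJ'int, hJ'M⟩ := hJ'
    obtain ⟨hadj, hrVC', hr'VC⟩ := hECfact hrr'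
    have hrne : r ≠ r' := hadj.ne
    obtain ⟨hxP, hxv1, hxvc, hxVC, hxVM, -⟩ := hAfact x hxA
    obtain ⟨hyP, hyv1, hyvc, hyVC, hyVM, -⟩ := hAfact y hyA
    obtain ⟨haP, -, -, haVC, -, -⟩ := hAfact a haA
    obtain ⟨ha'P, -, -, ha'VC, -, -⟩ := hAfact a' ha'A
    -- index facts
    have hidx_ax : P'.support.idxOf a < P'.support.idxOf x :=
      lt_of_le_of_ne (hafirst x hxA)
        (fun h => hxa ((List.idxOf_inj haP).1 h).symm)
    have hidx_xa' : P'.support.idxOf x < P'.support.idxOf a' :=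
      lt_of_le_of_ne (ha'last x hxA)
        (fun h => hxa' ((List.idxOf_inj hxP).1 h))
    -- the middle segment of P' between x and y, and the avoided vertex b
    have hy_cases : y ∈ (P'.takeUntil x hxP).support ∨ y ∈ (P'.dropUntil x hxP).support := by
      have hy' : y ∈ P'.support := hyP
      conv at hy' => rw [← SimpleGraph.Walk.take_spec P' hxP]
      exact (SimpleGraph.Walk.mem_support_append_iff _ _).1 hy'
    obtain ⟨seg, hsegP, hsegv1, hsegvc, b, hbA, hbseg, hbx, hby⟩ :
        ∃ seg : G.Walk x y, (∀ z ∈ seg.support, z ∈ P'.support) ∧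
          v1 ∉ seg.support ∧ vc ∉ seg.support ∧
          ∃ b, b ∈ A ∧ b ∉ seg.support ∧ b ≠ x ∧ b ≠ y := by
      rcases hy_cases with hy2 | hy1
      · -- y is in the first part : use the reversed segment, avoid a'
        set q := P'.takeUntil x hxP with hq
        have hqpath : q.IsPath := hP'path.takeUntil hxP
        refine ⟨(q.dropUntil y hy2).reverse, ?_, ?_, ?_, a', ha'A, ?_, ?_, ?_⟩
        · intro z hz
          rw [SimpleGraph.Walk.support_reverse, List.mem_reverse] at hz
          exact SimpleGraph.Walk.support_takeUntil_subset P' hxP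
            (SimpleGraph.Walk.support_dropUntil_subset q hy2 hz)
        · intro hv1
          rw [SimpleGraph.Walk.support_reverse, List.mem_reverse] at hv1
          have hv1t : v1 ∈ (q.takeUntil y hy2).support := by
            have : v1 ∈ q.support := SimpleGraph.Walk.start_mem_support q
            exact (SimpleGraph.Walk.start_mem_support _)
          exact hyv1 (take_drop_disj hqpath hy2 hv1t hv1).symm
        · intro hvc
          rw [SimpleGraph.Walk.support_reverse, List.mem_reverse] at hvc
          have hvcq : vc ∈ q.support := SimpleGraph.Walk.support_dropUntil_subset q hy2 hvc
          have hvcd : vc ∈ (P'.dropUntil x hxP).support := SimpleGraph.Walk.end_mem_support _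
          exact hxvc (take_drop_disj hP'path hxP hvcq hvcd).symm
        · intro ha's
          rw [SimpleGraph.Walk.support_reverse, List.mem_reverse] at ha's
          exact not_mem_takeUntil_of_idx_lt hP'path hxP hidx_xa'
            (SimpleGraph.Walk.support_dropUntil_subset q hy2 ha's)
        · exact fun h => hxa' h.symm
        · intro h
          exact not_mem_takeUntil_of_idx_lt hP'path hxP hidx_xa' (h ▸ hy2)
      · -- y is in the second part : use the forward segment, avoid a
        set q := P'.dropUntil x hxP with hq
        have hqpath : q.IsPath := hP'path.dropUntil hxP
        have hanq : a ∉ q.support := by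
          intro haq
          have hat : a ∈ (P'.takeUntil x hxP).support :=
            mem_takeUntil_of_idx_lt hxP haP hidx_ax
          exact hxa (take_drop_disj hP'path hxP hat haq).symm
        refine ⟨q.takeUntil y hy1, ?_, ?_, ?_, a, haA, ?_, ?_, ?_⟩
        · intro z hz
          exact SimpleGraph.Walk.support_dropUntil_subset P' hxP
            (SimpleGraph.Walk.support_takeUntil_subset q hy1 hz)
        · intro hv1
          have hv1t : v1 ∈ (P'.takeUntil x hxP).support := SimpleGraph.Walk.start_mem_support _
          have hv1q : v1 ∈ q.support := SimpleGraph.Walk.support_takeUntil_subset q hy1 hv1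
          exact hxv1 (take_drop_disj hP'path hxP hv1t hv1q).symm
        · intro hvc
          have hvcd : vc ∈ (q.dropUntil y hy1).support := SimpleGraph.Walk.end_mem_support _
          exact hyvc (take_drop_disj hqpath hy1 hvc hvcd).symm
        · exact fun h => hanq (SimpleGraph.Walk.support_takeUntil_subset q hy1 h)
        · exact fun h => hxa h.symm
        · exact fun h => hanq (h ▸ hy1)
    obtain ⟨hbP, hbv1, hbvc, hbVC, hbVM, m0, hm0VM, hm0b⟩ := hAfact b hbA
    have hbr : b ≠ r := fun h => hbVC (h ▸ hrVC')
    have hbr' : b ≠ r' := fun h => hbVC (h ▸ hr'VC)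
    -- the combined walk
    set W : G.Walk r r' := J.append (seg.append J'.reverse) with hW
    have hWsup : ∀ z, z ∈ W.support →
        z ∈ J.support ∨ z ∈ seg.support ∨ z ∈ J'.support := by
      intro z hz
      rw [hW, SimpleGraph.Walk.mem_support_append_iff,
        SimpleGraph.Walk.mem_support_append_iff, SimpleGraph.Walk.support_reverse,
        List.mem_reverse] at hz
      tauto
    have hWVM : ∀ z ∈ W.support, z ∉ VM := by
      intro z hz
      rcases hWsup z hz with h | h | h
      · exact hJM z h
      · exact fun hm => (hVMfact z hm).2 (hsegP z h)
      · exact hJ'M z h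
    have hWVC : ∀ z ∈ W.support, z ≠ r → z ≠ r' → z ∉ VC := by
      intro z hz hzr hzr'
      rcases hWsup z hz with h | h | h
      · by_cases hzx : z = x
        · exact hzx ▸ hxVC
        · exact fun hc => hJint z h hzr hzx (Or.inl hc)
      · exact hP'int z (hsegP z h) (fun hc => hsegv1 (hc ▸ h)) (fun hc => hsegvc (hc ▸ h))
      · by_cases hzy : z = y
        · exact hzy ▸ hyVC
        · exact fun hc => hJ'int z h hzr' hzy (Or.inl hc)
    have hWb : b ∉ W.support := by
      intro hbW
      rcases hWsup b hbW with h | h | h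
      · exact hJint b h hbr hbx (Or.inr hbA)
      · exact hbseg h
      · exact hJ'int b h hbr' hby (Or.inr hbA)
    -- the new path
    set p'' : G.Walk r r' := W.bypass with hp''
    have hp''path : p''.IsPath := W.bypass_isPath
    have hp''sub : ∀ z ∈ p''.support, z ∈ W.support :=
      fun z hz => W.support_bypass_subset hz
    have hp''esub : ∀ e ∈ p''.edges, e ∈ W.edges :=
      fun e he => W.edges_bypass_subset he
    -- s(r, r') is not an edge of W
    have hErr' : s(r, r') ∉ W.edges := by
      intro hE
      rw [hW, SimpleGraph.Walk.edges_append, SimpleGraph.Walk.edges_append,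
        SimpleGraph.Walk.edges_reverse] at hE
      rcases List.mem_append.1 hE with hE | hE
      · have hr's : r' ∈ J.support := SimpleGraph.Walk.snd_mem_support_of_mem_edges J hE
        by_cases h1 : r' = x
        · exact hxVC (h1 ▸ hr'VC)
        · exact hJint r' hr's hrne.symm h1 (Or.inl hr'VC)
      rcases List.mem_append.1 hE with hE | hE
      · have hrs : r ∈ seg.support := SimpleGraph.Walk.fst_mem_support_of_mem_edges seg hE
        exact hP'int r (hsegP r hrs) (fun hc => hsegv1 (hc ▸ hrs))
          (fun hc => hsegvc (hc ▸ hrs)) hrVC'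
      · rw [List.mem_reverse] at hE
        have hrs : r ∈ J'.support := by
          have := SimpleGraph.Walk.fst_mem_support_of_mem_edges J' hE
          exact this
        by_cases h1 : r = y
        · exact hyVC (h1 ▸ hrVC')
        · exact hJ'int r hrs hrne h1 (Or.inl hrVC')
    have hlen : 3 ≤ p''.support.length := by
      rw [SimpleGraph.Walk.length_support]
      have h2 : 2 ≤ p''.length :=
        two_le_length p'' hrne (fun h => hErr' (hp''esub _ h))
      omega
    have hp''int : ∀ z ∈ p''.support, z ≠ r → z ≠ r' → z ∉ VC :=
      fun z hz => hWVC z (hp''sub z hz)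
    have hm0VC : m0 ∉ VC := (hVMfact m0 hm0VM).1
    have hp''ne : VC ∪ {z | z ∈ p''.support} ≠ Set.univ := by
      intro h
      have : m0 ∈ VC ∪ {z | z ∈ p''.support} := h ▸ Set.mem_univ m0
      rcases this with h' | h'
      · exact hm0VC h'
      · exact hWVM m0 (hp''sub m0 h') hm0VM
    -- the bigger component
    set S : Set V := (VC ∪ {z | z ∈ p''.support})ᶜ with hS
    have hbS : b ∈ S := by
      simp only [hS, Set.mem_compl_iff, Set.mem_union, Set.mem_setOf_eq, not_or]
      exact ⟨hbVC, fun h => hWb (hp''sub b h)⟩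
    have hVMS : ∀ m ∈ VM, m ∈ S := by
      intro m hm
      simp only [hS, Set.mem_compl_iff, Set.mem_union, Set.mem_setOf_eq, not_or]
      exact ⟨(hVMfact m hm).1, fun h => hWVM m (hp''sub m h) hm⟩
    set M'' := (G.induce S).connectedComponentMk ⟨b, hbS⟩ with hM''
    -- all of VM is reachable to b inside S
    have hreachb : ∀ (m : V) (hm : m ∈ VM), (G.induce S).Reachable ⟨m, hVMS m hm⟩ ⟨b, hbS⟩ := by
      intro m hm
      -- first from m to m0 through VM
      have hmm0 : (G.induce S).Reachable ⟨m, hVMS m hm⟩ ⟨m0, hVMS m0 hm0VM⟩ := by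
        rw [hVM] at hm hm0VM
        obtain ⟨zm, hzm, hzmv⟩ := hm
        obtain ⟨zm0, hzm0, hzm0v⟩ := hm0VM
        rw [SimpleGraph.ConnectedComponent.mem_supp_iff] at hzm hzm0
        have hreach := SimpleGraph.ConnectedComponent.exact (hzm.trans hzm0.symm)
        obtain ⟨w⟩ := hreach
        have hwsupp : ∀ z ∈ w.support, (z : V) ∈ VM := by
          intro z hz
          have : SimpleGraph.Reachable _ zm z := ⟨w.takeUntil z hz⟩
          rw [hVM]
          refine ⟨z, ?_, rfl⟩
          rw [SimpleGraph.ConnectedComponent.mem_supp_iff, ← hzm]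
          exact (SimpleGraph.ConnectedComponent.sound this).symm
        have hres := reach_transfer (S := S) w
          (fun z hz => hVMS _ (hwsupp z hz)) (hVMS _ (hwsupp _ w.start_mem_support))
          (hVMS _ (hwsupp _ w.end_mem_support))
        subst hzmv
        subst hzm0v
        exact hres
      have hm0bre : (G.induce S).Reachable ⟨m0, hVMS m0 hm0VM⟩ ⟨b, hbS⟩ := by
        have : (G.induce S).Adj ⟨m0, hVMS m0 hm0VM⟩ ⟨b, hbS⟩ := hm0b
        exact this.reachable
      exact hmm0.trans hm0bre
    have hsubM'' : ∀ m ∈ VM, m ∈ Subtype.val '' M''.supp := by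
      intro m hm
      refine ⟨⟨m, hVMS m hm⟩, ?_, rfl⟩
      rw [SimpleGraph.ConnectedComponent.mem_supp_iff, hM'']
      exact SimpleGraph.ConnectedComponent.sound (hreachb m hm)
    have hbM'' : b ∈ Subtype.val '' M''.supp := by
      refine ⟨⟨b, hbS⟩, ?_, rfl⟩
      rw [SimpleGraph.ConnectedComponent.mem_supp_iff, hM'']
    -- apply maximality
    have hmaxle := hmax r r' hrr' p'' hp''path hlen hp''int hp''ne M''
    have hins : insert b VM ⊆ Subtype.val '' M''.supp := by
      intro z hz
      rcases Set.mem_insert_iff.1 hz with rfl | hz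
      · exact hbM''
      · exact hsubM'' z hz
    have hcard1 : (insert b VM).ncard = VM.ncard + 1 :=
      Set.ncard_insert_of_notMem hbVM VM.toFinite
    have hcard2 : (insert b VM).ncard ≤ (Subtype.val '' M''.supp).ncard :=
      Set.ncard_le_ncard hins (Set.toFinite _)
    rw [← hVM] at hmaxle
    omega
  refine ⟨part1, ?_⟩
  intro r r' hr hr' hEC
  obtain ⟨hr'VC, hnsub⟩ := (hbad r').1 hr'
  obtain ⟨x, hJx, -⟩ := Set.not_subset.1 hnsub
  exact part1 r r' hr hEC x hJx
end
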